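/- Fix r ∈ ℝ and let 𝓕 be a bounded subset of H^r(𝕋). Then 𝓕 is equicontinuous in H^r(𝕋), i.e. sup_{f∈𝓕} sup_{|y|<δ} ‖f(·+y) − f‖_{H^r} → 0 as δ → 0, if and only if 𝓕 is tight in the Fourier variable, i.e. sup_{f∈𝓕} Σ_{|n|≥κ} |f̂(n)|² (|n|+1)^{2r} → 0 as κ → ∞. -/

import Mathlib

open Real Complex

lemma abs_exp_sq (x : ℝ) :
    ‖Complex.exp (Complex.I * x) - 1‖ ^ 2 = 2 - 2 * Real.cos x := by
  rw [show Complex.I * (x:ℂ) = (x:ℂ) * Complex.I from mul_comm _ _, Complex.exp_mul_I,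
    Complex.sq_norm]
  rw [← Complex.ofReal_cos, ← Complex.ofReal_sin]
  rw [show (Real.cos x : ℂ) + (Real.sin x : ℂ) * Complex.I - 1
      = ((Real.cos x - 1 : ℝ) : ℂ) + (Real.sin x : ℝ) * Complex.I by push_cast; ring]
  rw [Complex.normSq_add_mul_I]
  nlinarith [Real.sin_sq_add_cos_sq x]

lemma two_sub_two_cos_le_sq (x : ℝ) : 2 - 2 * Real.cos x ≤ x ^ 2 := by
  have h1 : Real.cos x = 2 * Real.cos (x/2) ^ 2 - 1 := by
    rw [← Real.cos_two_mul]; ring_nf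
  have h2 := Real.sin_sq_add_cos_sq (x/2)
  have h3 : Real.sin (x/2) ^ 2 ≤ (x/2) ^ 2 := Real.sin_sq_le_sq
  nlinarith

lemma two_sub_two_cos_le_four (x : ℝ) : 2 - 2 * Real.cos x ≤ 4 := by
  nlinarith [Real.neg_one_le_cos x]

lemma two_sub_two_cos_nonneg (x : ℝ) : 0 ≤ 2 - 2 * Real.cos x := by
  nlinarith [Real.cos_le_one x]

lemma integral_two_sub_two_cos (c d : ℝ) (hc : c ≠ 0) :
    ∫ y in (0:ℝ)..d, (2 - 2 * Real.cos (c * y)) = 2 * d - 2 * Real.sin (c * d) / c := by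
  have key : ∀ e : ℝ, ∫ x in (0:ℝ)..e, (2 - 2 * Real.cos x) = 2 * e - 2 * Real.sin e := by
    intro e
    rw [intervalIntegral.integral_sub intervalIntegrable_const
      ((by fun_prop : Continuous fun x : ℝ => 2 * Real.cos x).intervalIntegrable _ _),
      intervalIntegral.integral_const, intervalIntegral.integral_const_mul, integral_cos]
    simp; ring
  rw [intervalIntegral.integral_comp_mul_left (fun x => 2 - 2 * Real.cos x) hc,
    mul_zero, key, smul_eq_mul]
  field_simp

lemma int_bound {d : ℝ} (hd : 0 < d) (c : ℝ) (hc : 2 / d ≤ |c|) :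
    d ≤ ∫ y in (0:ℝ)..d, (2 - 2 * Real.cos (c * y)) := by
  have hc0 : c ≠ 0 := by
    intro h
    rw [h, abs_zero] at hc
    have : (0:ℝ) < 2 / d := by positivity
    linarith
  rw [integral_two_sub_two_cos c d hc0]
  have habs : |2 * Real.sin (c * d)| ≤ 2 := by
    rw [abs_mul, show |(2:ℝ)| = 2 by norm_num]
    have := abs_le.2 ⟨Real.neg_one_le_sin (c*d), Real.sin_le_one (c*d)⟩
    nlinarith [abs_nonneg (Real.sin (c*d))]
  have h1 : |2 * Real.sin (c * d) / c| ≤ 2 / |c| := by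
    rw [abs_div]
    gcongr
  have h2 : 2 / |c| ≤ d := by
    rw [div_le_iff₀ (abs_pos.2 hc0)]
    rw [div_le_iff₀ hd] at hc
    linarith
  have h3 : 2 * Real.sin (c * d) / c ≤ d := le_trans (le_abs_self _) (h1.trans h2)
  linarith

lemma tsum_rw (f : ℤ → ℂ) (r y : ℝ) :
    (∑' n : ℤ, ‖(Complex.exp (Complex.I * n * y) - 1) * f n‖ ^ 2
      * (|(n : ℝ)| + 1) ^ (2 * r))
    = ∑' n : ℤ, (2 - 2 * Real.cos ((n:ℝ) * y))
        * (‖f n‖ ^ 2 * (|(n : ℝ)| + 1) ^ (2 * r)) := by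
  apply tsum_congr
  intro n
  rw [norm_mul, mul_pow,
    show Complex.I * (n:ℂ) * (y:ℂ) = Complex.I * (((n:ℝ) * y : ℝ) : ℂ) by push_cast; ring,
    abs_exp_sq]
  ring

theorem equicontinuous_iff_tight (r : ℝ) (F : Set (ℤ → ℂ)) (B : ℝ)
    (hbdd : ∀ f ∈ F, Summable (fun n : ℤ => ‖f n‖ ^ 2 * (|(n : ℝ)| + 1) ^ (2 * r))
      ∧ (∑' n : ℤ, ‖f n‖ ^ 2 * (|(n : ℝ)| + 1) ^ (2 * r)) ≤ B) :
    (∀ ε > (0 : ℝ), ∃ δ > (0 : ℝ), ∀ f ∈ F, ∀ y : ℝ, |y| < δ →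
        Real.sqrt (∑' n : ℤ,
          ‖(Complex.exp (Complex.I * n * y) - 1) * f n‖ ^ 2
            * (|(n : ℝ)| + 1) ^ (2 * r)) ≤ ε)
    ↔ (∀ ε > (0 : ℝ), ∃ K : ℝ, ∀ f ∈ F,
        (∑' n : ℤ, (if K ≤ |(n : ℝ)| then
            ‖f n‖ ^ 2 * (|(n : ℝ)| + 1) ^ (2 * r) else 0)) ≤ ε) := by
  constructor
  · -- equicontinuity → tightness
    intro h ε hε
    obtain ⟨δ, hδ, hEq⟩ := h (Real.sqrt ε) (Real.sqrt_pos.2 hε)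
    refine ⟨4 / δ + 1, ?_⟩
    intro f hf
    obtain ⟨hsum, hB⟩ := hbdd f hf
    set g : ℤ → ℝ := fun n => ‖f n‖ ^ 2 * (|(n : ℝ)| + 1) ^ (2 * r) with hgdef
    have hg0 : ∀ n, 0 ≤ g n := fun n => by
      simp only [hgdef]; positivity
    have hsummY : ∀ y : ℝ, Summable (fun n : ℤ => (2 - 2 * Real.cos ((n:ℝ) * y)) * g n) := by
      intro y
      refine Summable.of_nonneg_of_le
        (fun n => mul_nonneg (two_sub_two_cos_nonneg _) (hg0 n))
        (fun n => mul_le_mul_of_nonneg_right (two_sub_two_cos_le_four _) (hg0 n))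
        (hsum.mul_left 4)
    have hSy : ∀ y : ℝ, |y| < δ →
        (∑' n : ℤ, (2 - 2 * Real.cos ((n:ℝ) * y)) * g n) ≤ ε := by
      intro y hy
      have h1 := hEq f hf y hy
      rw [tsum_rw f r y] at h1
      set S := ∑' n : ℤ, (2 - 2 * Real.cos ((n:ℝ) * y)) * g n with hS
      have hS0 : 0 ≤ S :=
        tsum_nonneg fun n => mul_nonneg (two_sub_two_cos_nonneg _) (hg0 n)
      calc S = Real.sqrt S ^ 2 := (Real.sq_sqrt hS0).symm
        _ ≤ Real.sqrt ε ^ 2 := by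
            exact pow_le_pow_left₀ (Real.sqrt_nonneg _) h1 2
        _ = ε := Real.sq_sqrt hε.le
    set d : ℝ := δ / 2 with hd
    have hd0 : 0 < d := by positivity
    set ind : ℤ → ℝ := fun n => if 4 / δ + 1 ≤ |(n : ℝ)| then g n else 0 with hinddef
    have hind0 : ∀ n, 0 ≤ ind n := by
      intro n; simp only [hinddef]; split_ifs; exacts [hg0 n, le_refl 0]
    have hindle : ∀ n, ind n ≤ g n := by
      intro n; simp only [hinddef]; split_ifs; exacts [le_refl _, hg0 n]
    have hindsum : Summable ind := Summable.of_nonneg_of_le hind0 hindle hsum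
    refine Summable.tsum_le_of_sum_le hindsum ?_
    intro s
    have hmul : (∑ n ∈ s, ind n) * d ≤ ε * d := by
      calc (∑ n ∈ s, ind n) * d = ∑ n ∈ s, ind n * d := by rw [Finset.sum_mul]
        _ ≤ ∑ n ∈ s, ∫ y in (0:ℝ)..d, (2 - 2 * Real.cos ((n:ℝ) * y)) * g n := by
            refine Finset.sum_le_sum fun n _ => ?_
            rw [intervalIntegral.integral_mul_const]
            by_cases hn : 4 / δ + 1 ≤ |(n : ℝ)|
            · have hIc : 2 / d ≤ |(n : ℝ)| := by
                rw [hd]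
                rw [show (2:ℝ) / (δ/2) = 4 / δ by field_simp; ring]
                linarith
              have hI := int_bound hd0 ((n:ℝ)) hIc
              calc ind n * d = g n * d := by rw [hinddef]; simp [hn]
                _ = d * g n := mul_comm _ _
                _ ≤ (∫ y in (0:ℝ)..d, (2 - 2 * Real.cos ((n:ℝ) * y))) * g n :=
                    mul_le_mul_of_nonneg_right hI (hg0 n)
            · have : ind n = 0 := by rw [hinddef]; simp [hn]
              rw [this, zero_mul]
              exact mul_nonneg
                (intervalIntegral.integral_nonneg hd0.le fun y _ => two_sub_two_cos_nonneg _)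
                (hg0 n)
        _ = ∫ y in (0:ℝ)..d, ∑ n ∈ s, (2 - 2 * Real.cos ((n:ℝ) * y)) * g n := by
            rw [intervalIntegral.integral_finset_sum]
            intro n _
            exact Continuous.intervalIntegrable (by fun_prop) _ _
        _ ≤ ∫ y in (0:ℝ)..d, ε := by
            apply intervalIntegral.integral_mono_on hd0.le
            · apply Continuous.intervalIntegrable
              apply continuous_finset_sum
              intro n _
              exact (by fun_prop :
                Continuous fun y : ℝ => (2 - 2 * Real.cos ((n:ℝ) * y)) * g n)
            · exact intervalIntegrable_const
            · intro y hy'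
              have hylt : |y| < δ := by
                rw [_root_.abs_of_nonneg hy'.1]
                have := hy'.2
                rw [hd] at this
                linarith
              calc ∑ n ∈ s, (2 - 2 * Real.cos ((n:ℝ) * y)) * g n
                  ≤ ∑' n : ℤ, (2 - 2 * Real.cos ((n:ℝ) * y)) * g n :=
                    Summable.sum_le_tsum s (fun n _ =>
                      mul_nonneg (two_sub_two_cos_nonneg _) (hg0 n)) (hsummY y)
                _ ≤ ε := hSy y hylt
        _ = ε * d := by
            rw [intervalIntegral.integral_const, smul_eq_mul]
            ring
    exact le_of_mul_le_mul_right hmul hd0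
  · -- tightness → equicontinuity
    intro h ε hε
    obtain ⟨K, hK⟩ := h (ε ^ 2 / 8) (by positivity)
    set K₁ : ℝ := |K| + 1 with hK₁def
    have hK₁0 : 0 < K₁ := by positivity
    set B' : ℝ := max B 0 with hB'def
    have hB'0 : 0 ≤ B' := le_max_right _ _
    have hsq : Real.sqrt (B' + 1) ^ 2 = B' + 1 := Real.sq_sqrt (by linarith)
    have hsqpos : 0 < Real.sqrt (B' + 1) := Real.sqrt_pos.2 (by linarith)
    set δ : ℝ := min 1 (ε / (2 * K₁ * Real.sqrt (B' + 1))) with hδdef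
    have hδ0 : 0 < δ := lt_min one_pos (by positivity)
    refine ⟨δ, hδ0, ?_⟩
    intro f hf y hy
    obtain ⟨hsum, hB⟩ := hbdd f hf
    set g : ℤ → ℝ := fun n => ‖f n‖ ^ 2 * (|(n : ℝ)| + 1) ^ (2 * r) with hgdef
    have hg0 : ∀ n, 0 ≤ g n := fun n => by
      simp only [hgdef]; positivity
    set ind : ℤ → ℝ := fun n => if K ≤ |(n : ℝ)| then g n else 0 with hinddef
    have hind0 : ∀ n, 0 ≤ ind n := by
      intro n; simp only [hinddef]; split_ifs; exacts [hg0 n, le_refl 0]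
    have hindle : ∀ n, ind n ≤ g n := by
      intro n; simp only [hinddef]; split_ifs; exacts [le_refl _, hg0 n]
    have hindsum : Summable ind := Summable.of_nonneg_of_le hind0 hindle hsum
    rw [tsum_rw f r y]
    have hy2 : y ^ 2 ≤ δ ^ 2 := by
      have h1 : |y| ^ 2 ≤ δ ^ 2 := pow_le_pow_left₀ (abs_nonneg y) hy.le 2
      rwa [_root_.sq_abs] at h1
    have hterm : ∀ n : ℤ, (2 - 2 * Real.cos ((n:ℝ) * y)) * g n
        ≤ K₁ ^ 2 * δ ^ 2 * g n + 4 * ind n := by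
      intro n
      by_cases hn : K₁ ≤ |(n : ℝ)|
      · have hKn : K ≤ |(n : ℝ)| := by
          have : K ≤ K₁ := by
            rw [hK₁def]; have := le_abs_self K; linarith
          linarith
        have hie : ind n = g n := by rw [hinddef]; simp [hKn]
        rw [hie]
        have h4 := mul_le_mul_of_nonneg_right (two_sub_two_cos_le_four ((n:ℝ) * y)) (hg0 n)
        nlinarith [mul_nonneg (mul_nonneg (sq_nonneg K₁) (sq_nonneg δ)) (hg0 n)]
      · push_neg at hn
        have hb1 : (2 - 2 * Real.cos ((n:ℝ) * y)) ≤ K₁ ^ 2 * δ ^ 2 := by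
          have h5 : ((n:ℝ) * y) ^ 2 ≤ K₁ ^ 2 * δ ^ 2 := by
            have hn2 : (n:ℝ) ^ 2 ≤ K₁ ^ 2 := by
              have := _root_.sq_abs ((n:ℝ))
              nlinarith [abs_nonneg ((n:ℝ))]
            have hy0 : (0:ℝ) ≤ y ^ 2 := sq_nonneg y
            calc ((n:ℝ) * y) ^ 2 = (n:ℝ) ^ 2 * y ^ 2 := by ring
              _ ≤ K₁ ^ 2 * y ^ 2 := mul_le_mul_of_nonneg_right hn2 hy0
              _ ≤ K₁ ^ 2 * δ ^ 2 := mul_le_mul_of_nonneg_left hy2 (sq_nonneg K₁)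
          exact (two_sub_two_cos_le_sq _).trans h5
        have h6 := mul_le_mul_of_nonneg_right hb1 (hg0 n)
        nlinarith [mul_nonneg (by norm_num : (0:ℝ) ≤ 4) (hind0 n)]
    have hsummL : Summable (fun n : ℤ => (2 - 2 * Real.cos ((n:ℝ) * y)) * g n) := by
      refine Summable.of_nonneg_of_le
        (fun n => mul_nonneg (two_sub_two_cos_nonneg _) (hg0 n))
        (fun n => mul_le_mul_of_nonneg_right (two_sub_two_cos_le_four _) (hg0 n))
        (hsum.mul_left 4)
    have hsummR : Summable (fun n : ℤ => K₁ ^ 2 * δ ^ 2 * g n + 4 * ind n) :=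
      (hsum.mul_left _).add (hindsum.mul_left 4)
    have hle : (∑' n : ℤ, (2 - 2 * Real.cos ((n:ℝ) * y)) * g n) ≤ ε ^ 2 := by
      calc (∑' n : ℤ, (2 - 2 * Real.cos ((n:ℝ) * y)) * g n)
          ≤ ∑' n : ℤ, (K₁ ^ 2 * δ ^ 2 * g n + 4 * ind n) :=
            Summable.tsum_le_tsum hterm hsummL hsummR
        _ = K₁ ^ 2 * δ ^ 2 * (∑' n, g n) + 4 * (∑' n, ind n) := by
            rw [Summable.tsum_add (hsum.mul_left _) (hindsum.mul_left 4), tsum_mul_left, tsum_mul_left]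
        _ ≤ ε ^ 2 := by
            have h1 : (∑' n, g n) ≤ B' := hB.trans (le_max_left _ _)
            have h2 : (∑' n, ind n) ≤ ε ^ 2 / 8 := by
              have := hK f hf
              rw [hinddef]
              convert this using 2
            have h3 : (0:ℝ) ≤ ∑' n, g n := tsum_nonneg hg0
            have hδle : δ ≤ ε / (2 * K₁ * Real.sqrt (B' + 1)) := min_le_right _ _
            have h5 : δ ^ 2 ≤ (ε / (2 * K₁ * Real.sqrt (B' + 1))) ^ 2 :=
              pow_le_pow_left₀ hδ0.le hδle 2
            have e1 : (ε / (2 * K₁ * Real.sqrt (B' + 1))) ^ 2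
                = ε ^ 2 / (4 * K₁ ^ 2 * (B' + 1)) := by
              rw [div_pow, mul_pow, mul_pow, hsq]
              norm_num
            rw [e1] at h5
            have key : K₁ ^ 2 * δ ^ 2 * B' ≤ ε ^ 2 / 4 := by
              have e3 : K₁ ^ 2 * δ ^ 2 * B'
                  ≤ K₁ ^ 2 * (ε ^ 2 / (4 * K₁ ^ 2 * (B' + 1))) * B' :=
                mul_le_mul_of_nonneg_right
                  (mul_le_mul_of_nonneg_left h5 (sq_nonneg K₁)) hB'0
              have e4 : K₁ ^ 2 * (ε ^ 2 / (4 * K₁ ^ 2 * (B' + 1))) * B'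
                  = ε ^ 2 * (B' / (B' + 1)) / 4 := by
                field_simp
              have e5 : B' / (B' + 1) ≤ 1 := by
                rw [div_le_one (by linarith)]; linarith
              have e6 : ε ^ 2 * (B' / (B' + 1)) / 4 ≤ ε ^ 2 / 4 := by
                have := mul_le_mul_of_nonneg_left e5 (sq_nonneg ε)
                linarith
              linarith [e3.trans_eq e4]
            have h7 : K₁ ^ 2 * δ ^ 2 * (∑' n, g n) ≤ K₁ ^ 2 * δ ^ 2 * B' :=
              mul_le_mul_of_nonneg_left h1
                (mul_nonneg (sq_nonneg K₁) (sq_nonneg δ))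
            have h2' : 4 * (∑' n, ind n) ≤ ε ^ 2 / 2 := by linarith
            calc K₁ ^ 2 * δ ^ 2 * (∑' n, g n) + 4 * (∑' n, ind n)
                ≤ K₁ ^ 2 * δ ^ 2 * B' + ε ^ 2 / 2 := add_le_add h7 h2'
              _ ≤ ε ^ 2 / 4 + ε ^ 2 / 2 := by linarith [key]
              _ ≤ ε ^ 2 := by nlinarith [sq_nonneg ε]
    calc Real.sqrt (∑' n : ℤ, (2 - 2 * Real.cos ((n:ℝ) * y)) * g n)
        ≤ Real.sqrt (ε ^ 2) := Real.sqrt_le_sqrt hle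
      _ = ε := Real.sqrt_sq hε.le
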